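/- arXiv:1504.02670 — 2 statements merged into one kernel-verified Lean document; each statement's English description precedes it below -/
import Mathlib

section
/- Let γ be a closed path of length p at a vertex u in a countable oriented graph, with first-return decomposition γ = γ_1 * ... * γ_j. Fix M ≥ 1 and let γ⁻ (resp. γ⁺) be the concatenation of the first returns γ_i of length ≤ M (resp. > M), and let i(γ) ⊂ {1,...,p} record the starting times of the long first returns. Then the map γ ↦ (γ⁻, γ⁺, i(γ)) is injective on closed paths of length p at u, the number of long first returns is at most p/M, and the length of γ⁻ is at least r(γ) − #i(γ), where r(γ) is the number of visits of γ to u. -/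
open Filter Topology

/-- `l` is (the list of vertices of) a closed path of length `p` at `u` in the oriented
graph `G`. -/
def IsClosedPathList {V : Type*} (G : V → V → Prop) (u : V) (p : ℕ) (l : List V) : Prop :=
  l.length = p + 1 ∧ l.head? = some u ∧ l.getLast? = some u ∧ l.Chain' G

/-- `l` is a first return at `u` of length `p`. -/
def IsFirstReturn {V : Type*} (G : V → V → Prop) (u : V) (p : ℕ) (l : List V) : Prop :=
  IsClosedPathList G u p l ∧ ∀ i, 0 < i → i < p → l[i]? ≠ some u

/-- Concatenation of a list of closed paths at a common base point. -/
def concatPaths {V : Type*} (ls : List (List V)) : List V :=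
  ls.foldr (fun a b => a ++ b.tail) []

namespace JumpsAux

variable {V : Type*} {G : V → V → Prop} {u : V} {M : ℕ}

def FRet (G : V → V → Prop) (u : V) (l : List V) : Prop :=
  ∃ q, 0 < q ∧ IsFirstReturn G u q l

lemma frt_len {l : List V} (h : FRet G u l) : 2 ≤ l.length := by
  obtain ⟨q, hq, ⟨⟨hl, _, _, _⟩, _⟩⟩ := h; omega

lemma frt_head {l : List V} (h : FRet G u l) : l.head? = some u := by
  obtain ⟨q, hq, ⟨⟨_, h2, _, _⟩, _⟩⟩ := h; exact h2

lemma frt_last {l : List V} (h : FRet G u l) : l.getLast? = some u := by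
  obtain ⟨q, hq, ⟨⟨_, _, h3, _⟩, _⟩⟩ := h; exact h3

lemma frt_interior {l : List V} (h : FRet G u l) :
    ∀ i, 0 < i → i + 1 < l.length → l[i]? ≠ some u := by
  obtain ⟨q, hq, ⟨⟨hl, _, _, _⟩, hint⟩⟩ := h
  intro i h1 h2
  exact hint i h1 (by omega)

lemma frt_cons {l : List V} (h : FRet G u l) : l = u :: l.tail := by
  have := frt_head h
  cases l with
  | nil => simp at this
  | cons a t => simp_all

lemma frt_dropLast {l : List V} (h : FRet G u l) : l = l.dropLast ++ [u] := by
  have hne : l ≠ [] := by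
    have := frt_len h; intro hh; simp [hh] at this
  have h1 := List.dropLast_append_getLast hne
  have h2 : l.getLast hne = u := by
    have := frt_last h
    rwa [List.getLast?_eq_getLast hne, Option.some_inj] at this
  conv_lhs => rw [← h1, h2]

lemma cp_nil : concatPaths ([] : List (List V)) = [] := rfl

lemma cp_cons (a : List V) (t : List (List V)) :
    concatPaths (a :: t) = a ++ (concatPaths t).tail := rfl

lemma eq_cons_head {l : List V} (h : l.head? = some u) : l = u :: l.tail := by
  cases l with
  | nil => simp at h
  | cons b s =>
      simp only [List.head?_cons, Option.some_inj] at h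
      rw [List.tail_cons, h]

lemma cp_two_le {ls : List (List V)} (h : ∀ l ∈ ls, FRet G u l) (hne : ls ≠ []) :
    2 ≤ (concatPaths ls).length := by
  cases ls with
  | nil => simp at hne
  | cons a t =>
      have := frt_len (h a (by simp))
      rw [cp_cons]
      simp only [List.length_append]
      omega

lemma cp_head {ls : List (List V)} (h : ∀ l ∈ ls, FRet G u l) (hne : ls ≠ []) :
    (concatPaths ls).head? = some u := by
  cases ls with
  | nil => simp at hne
  | cons a t =>
      rw [cp_cons, frt_cons (h a (by simp))]
      simp

lemma cp_cons_eq {a : List V} {t : List (List V)} (ha : FRet G u a)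
    (ht : ∀ l ∈ t, FRet G u l) (hne : t ≠ []) :
    concatPaths (a :: t) = a.dropLast ++ concatPaths t := by
  have h1 : concatPaths t = u :: (concatPaths t).tail := eq_cons_head (cp_head ht hne)
  rw [cp_cons]
  conv_lhs => rw [frt_dropLast ha]
  rw [List.append_assoc]
  congr 1
  rw [h1]
  rfl

lemma cp_len {ls : List (List V)} (h : ∀ l ∈ ls, FRet G u l) (hne : ls ≠ []) :
    (concatPaths ls).length = ((ls.map fun l => l.length - 1).sum) + 1 := by
  induction ls with
  | nil => simp at hne
  | cons a t ih =>
      have ha := frt_len (h a (by simp))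
      by_cases hte : t = []
      · subst hte
        simp [cp_cons, cp_nil]
        omega
      · rw [cp_cons_eq (h a (by simp)) (fun l hl => h l (by simp [hl])) hte]
        rw [List.length_append, ih (fun l hl => h l (by simp [hl])) hte]
        simp [List.length_dropLast]
        omega


lemma frt_getLast_get? {l : List V} (h : FRet G u l) :
    l[l.length - 1]? = some u := by
  rw [← List.getLast?_eq_getElem?]
  exact frt_last h

lemma prefUniq_aux {a₁ a₂ x₁ x₂ : List V} (h₁ : FRet G u a₁) (h₂ : FRet G u a₂)
    (h : a₁ ++ x₁ = a₂ ++ x₂) (hle : a₁.length ≤ a₂.length) : a₁ = a₂ := by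
  have htake : a₁ = a₂.take a₁.length := by
    have := congrArg (List.take a₁.length) h
    rwa [List.take_left, List.take_append_of_le_length hle] at this
  rcases eq_or_lt_of_le hle with heq | hlt
  · rw [htake, heq, List.take_length]
  · exfalso
    have hl1 := frt_len h₁
    have hget : a₂[a₁.length - 1]? = some u := by
      have h3 := frt_getLast_get? h₁
      rw [htake, List.length_take, min_eq_left hle,
        List.getElem?_take] at h3
      rw [if_pos (by omega)] at h3
      exact h3
    exact frt_interior h₂ (a₁.length - 1) (by omega) (by omega) hget

lemma prefUniq {a₁ a₂ x₁ x₂ : List V} (h₁ : FRet G u a₁) (h₂ : FRet G u a₂)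
    (h : a₁ ++ x₁ = a₂ ++ x₂) : a₁ = a₂ := by
  rcases le_total a₁.length a₂.length with hle | hle
  · exact prefUniq_aux h₁ h₂ h hle
  · exact (prefUniq_aux h₂ h₁ h.symm hle).symm

lemma tailEq {ls₁ ls₂ : List (List V)} (h₁ : ∀ l ∈ ls₁, FRet G u l)
    (h₂ : ∀ l ∈ ls₂, FRet G u l)
    (h : (concatPaths ls₁).tail = (concatPaths ls₂).tail) :
    concatPaths ls₁ = concatPaths ls₂ := by
  by_cases he₁ : ls₁ = [] <;> by_cases he₂ : ls₂ = []
  · rw [he₁, he₂]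
  · exfalso
    have := cp_two_le h₂ he₂
    have := congrArg List.length h
    rw [he₁] at this
    simp [cp_nil] at this
    omega
  · exfalso
    have := cp_two_le h₁ he₁
    have := congrArg List.length h
    rw [he₂] at this
    simp [cp_nil] at this
    omega
  · have e₁ : concatPaths ls₁ = u :: (concatPaths ls₁).tail := eq_cons_head (cp_head h₁ he₁)
    have e₂ : concatPaths ls₂ = u :: (concatPaths ls₂).tail := eq_cons_head (cp_head h₂ he₂)
    rw [e₁, e₂, h]

lemma decUniq {ls₁ : List (List V)} : ∀ {ls₂ : List (List V)},
    (∀ l ∈ ls₁, FRet G u l) → (∀ l ∈ ls₂, FRet G u l) →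
    concatPaths ls₁ = concatPaths ls₂ → ls₁ = ls₂ := by
  induction ls₁ with
  | nil =>
      intro ls₂ h₁ h₂ h
      cases ls₂ with
      | nil => rfl
      | cons a t =>
          exfalso
          have hA := cp_two_le h₂ (List.cons_ne_nil a t)
          have hB := congrArg List.length h
          simp only [cp_nil, List.length_nil] at hB
          omega
  | cons a t ih =>
      intro ls₂ h₁ h₂ h
      cases ls₂ with
      | nil =>
          exfalso
          have hA := cp_two_le h₁ (List.cons_ne_nil a t)
          have hB := congrArg List.length h
          simp only [cp_nil, List.length_nil] at hB
          omega
      | cons a₂ t₂ =>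
          rw [cp_cons, cp_cons] at h
          have ha : a = a₂ := prefUniq (h₁ a (by simp)) (h₂ a₂ (by simp)) h
          subst ha
          have htl : (concatPaths t).tail = (concatPaths t₂).tail :=
            List.append_cancel_left h
          have hcp : concatPaths t = concatPaths t₂ :=
            tailEq (fun l hl => h₁ l (by simp [hl])) (fun l hl => h₂ l (by simp [hl])) htl
          rw [ih (fun l hl => h₁ l (by simp [hl])) (fun l hl => h₂ l (by simp [hl])) hcp]


def Ssum (ls : List (List V)) (k : ℕ) : ℕ := ((ls.take k).map fun l => l.length - 1).sum

def iSet (M : ℕ) (ls : List (List V)) : Set ℕ :=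
  {n : ℕ | ∃ (k : ℕ) (h : k < ls.length), M + 1 < (ls.get ⟨k, h⟩).length ∧ n = Ssum ls k}

lemma Ssum_zero (ls : List (List V)) : Ssum ls 0 = 0 := rfl

lemma Ssum_succ (a : List V) (t : List (List V)) (k : ℕ) :
    Ssum (a :: t) (k + 1) = (a.length - 1) + Ssum t k := by
  simp [Ssum]

lemma iSet_zero {a : List V} {t : List (List V)} (ha : FRet G u a) :
    0 ∈ iSet M (a :: t) ↔ M + 1 < a.length := by
  constructor
  · rintro ⟨k, hk, hlong, h0⟩
    cases k with
    | zero => exact hlong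
    | succ k' =>
        exfalso
        rw [Ssum_succ] at h0
        have := frt_len ha
        omega
  · intro h
    exact ⟨0, by simp, h, rfl⟩

lemma iSet_shift {a : List V} {t : List (List V)} (ha : FRet G u a) (n : ℕ) :
    n + (a.length - 1) ∈ iSet M (a :: t) ↔ n ∈ iSet M t := by
  have hla := frt_len ha
  constructor
  · rintro ⟨k, hk, hlong, hsum⟩
    cases k with
    | zero =>
        exfalso
        rw [Ssum_zero] at hsum
        omega
    | succ k' =>
        rw [Ssum_succ] at hsum
        refine ⟨k', by simpa using hk, by simpa using hlong, by omega⟩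
  · rintro ⟨k, hk, hlong, rfl⟩
    exact ⟨k + 1, by simpa using hk, by simpa using hlong, by rw [Ssum_succ]; omega⟩

lemma filter_cons_pos {q : List V → Prop} [DecidablePred q] {a : List V} {t : List (List V)}
    (h : q a) : (a :: t).filter (fun l => q l) = a :: t.filter (fun l => q l) := by
  simp [List.filter_cons, h]

lemma filter_cons_neg {q : List V → Prop} [DecidablePred q] {a : List V} {t : List (List V)}
    (h : ¬ q a) : (a :: t).filter (fun l => q l) = t.filter (fun l => q l) := by
  simp [List.filter_cons, h]

lemma cp_cons_len (a : List V) (t : List (List V)) :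
    a.length ≤ (concatPaths (a :: t)).length := by
  rw [cp_cons]; simp

lemma encInj {M : ℕ} : ∀ (ls₁ ls₂ : List (List V)),
    (∀ l ∈ ls₁, FRet G u l) → (∀ l ∈ ls₂, FRet G u l) →
    concatPaths (ls₁.filter fun l => l.length ≤ M + 1) =
      concatPaths (ls₂.filter fun l => l.length ≤ M + 1) →
    concatPaths (ls₁.filter fun l => ¬ l.length ≤ M + 1) =
      concatPaths (ls₂.filter fun l => ¬ l.length ≤ M + 1) →
    iSet M ls₁ = iSet M ls₂ → ls₁ = ls₂ := by
  intro ls₁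
  induction ls₁ with
  | nil =>
      intro ls₂ h₁ h₂ hS hL hI
      cases ls₂ with
      | nil => rfl
      | cons a t =>
          exfalso
          have ha := frt_len (h₂ a (by simp))
          by_cases hsh : a.length ≤ M + 1
          · rw [filter_cons_pos hsh] at hS
            have := (cp_cons_len a (t.filter fun l => l.length ≤ M + 1)).trans_eq
              (congrArg List.length hS).symm
            simp only [List.filter_nil, cp_nil, List.length_nil] at this
            omega
          · rw [filter_cons_pos (q := fun l => ¬ l.length ≤ M + 1) hsh] at hL
            have := (cp_cons_len a (t.filter fun l => ¬ l.length ≤ M + 1)).trans_eq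
              (congrArg List.length hL).symm
            simp only [List.filter_nil, cp_nil, List.length_nil] at this
            omega
  | cons a t ih =>
      intro ls₂ h₁ h₂ hS hL hI
      cases ls₂ with
      | nil =>
          exfalso
          have ha := frt_len (h₁ a (by simp))
          by_cases hsh : a.length ≤ M + 1
          · rw [filter_cons_pos hsh] at hS
            have := (cp_cons_len a (t.filter fun l => l.length ≤ M + 1)).trans_eq
              (congrArg List.length hS)
            simp only [List.filter_nil, cp_nil, List.length_nil] at this
            omega
          · rw [filter_cons_pos (q := fun l => ¬ l.length ≤ M + 1) hsh] at hL
            have := (cp_cons_len a (t.filter fun l => ¬ l.length ≤ M + 1)).trans_eq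
              (congrArg List.length hL)
            simp only [List.filter_nil, cp_nil, List.length_nil] at this
            omega
      | cons a₂ t₂ =>
          have ha : FRet G u a := h₁ a (by simp)
          have ha₂ : FRet G u a₂ := h₂ a₂ (by simp)
          have ht : ∀ l ∈ t, FRet G u l := fun l hl => h₁ l (by simp [hl])
          have ht₂ : ∀ l ∈ t₂, FRet G u l := fun l hl => h₂ l (by simp [hl])
          have hlong_iff : (M + 1 < a.length) ↔ (M + 1 < a₂.length) := by
            rw [← iSet_zero (t := t) ha, ← iSet_zero (t := t₂) ha₂, hI]
          -- auxiliary to conclude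
          have finish : a = a₂ → concatPaths (t.filter fun l => l.length ≤ M + 1) =
              concatPaths (t₂.filter fun l => l.length ≤ M + 1) →
              concatPaths (t.filter fun l => ¬ l.length ≤ M + 1) =
              concatPaths (t₂.filter fun l => ¬ l.length ≤ M + 1) → a :: t = a₂ :: t₂ := by
            intro hae hS' hL'
            subst hae
            have hIt : iSet M t = iSet M t₂ := by
              ext n
              rw [← iSet_shift (t := t) ha n, ← iSet_shift (t := t₂) ha n, hI]
            rw [ih t₂ ht ht₂ hS' hL' hIt]
          by_cases hsh : a.length ≤ M + 1
          · have hsh₂ : a₂.length ≤ M + 1 := by omega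
            rw [filter_cons_pos hsh, filter_cons_pos hsh₂, cp_cons, cp_cons] at hS
            have hfr₁ : ∀ l ∈ t.filter (fun l => l.length ≤ M + 1), FRet G u l :=
              fun l hl => ht l (List.mem_of_mem_filter hl)
            have hfr₂ : ∀ l ∈ t₂.filter (fun l => l.length ≤ M + 1), FRet G u l :=
              fun l hl => ht₂ l (List.mem_of_mem_filter hl)
            have hae : a = a₂ := prefUniq ha ha₂ hS
            subst hae
            have hS' := tailEq hfr₁ hfr₂ (List.append_cancel_left hS)
            rw [filter_cons_neg (q := fun l => ¬ l.length ≤ M + 1) (not_not_intro hsh),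
              filter_cons_neg (q := fun l => ¬ l.length ≤ M + 1) (not_not_intro hsh)] at hL
            exact finish rfl hS' hL
          · have hsh₂ : ¬ a₂.length ≤ M + 1 := by omega
            rw [filter_cons_pos (q := fun l => ¬ l.length ≤ M + 1) hsh,
              filter_cons_pos (q := fun l => ¬ l.length ≤ M + 1) hsh₂,
              cp_cons, cp_cons] at hL
            have hfr₁ : ∀ l ∈ t.filter (fun l => ¬ l.length ≤ M + 1), FRet G u l :=
              fun l hl => ht l (List.mem_of_mem_filter hl)
            have hfr₂ : ∀ l ∈ t₂.filter (fun l => ¬ l.length ≤ M + 1), FRet G u l :=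
              fun l hl => ht₂ l (List.mem_of_mem_filter hl)
            have hae : a = a₂ := prefUniq ha ha₂ hL
            subst hae
            have hL' := tailEq hfr₁ hfr₂ (List.append_cancel_left hL)
            rw [filter_cons_neg hsh, filter_cons_neg hsh] at hS
            exact finish rfl hS hL'


lemma visits_mem : ∀ (ls : List (List V)), (∀ l ∈ ls, FRet G u l) →
    ∀ k, k + 1 < (concatPaths ls).length → (concatPaths ls)[k]? = some u →
    ∃ j, j < ls.length ∧ k = Ssum ls j := by
  intro ls
  induction ls with
  | nil =>
      intro _ k hk _
      simp [cp_nil] at hk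
  | cons a t ih =>
      intro h k hk hget
      have ha : FRet G u a := h a (by simp)
      have ht : ∀ l ∈ t, FRet G u l := fun l hl => h l (by simp [hl])
      have hla := frt_len ha
      by_cases hte : t = []
      · subst hte
        rw [cp_cons, cp_nil] at hk hget
        simp only [List.tail_nil, List.append_nil] at hk hget
        rcases Nat.eq_zero_or_pos k with hk0 | hk0
        · exact ⟨0, by simp, by simp [hk0, Ssum_zero]⟩
        · exact absurd hget (frt_interior ha k hk0 hk)
      · rw [cp_cons_eq ha ht hte] at hk hget
        rcases lt_or_ge k (a.length - 1) with hcase | hcase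
        · have hgl : a[k]? = some u := by
            rw [List.getElem?_append_left (by simp [List.length_dropLast]; omega)] at hget
            conv_lhs => rw [frt_dropLast ha]
            rw [List.getElem?_append_left (by simp [List.length_dropLast]; omega)]
            exact hget
          rcases Nat.eq_zero_or_pos k with hk0 | hk0
          · exact ⟨0, by simp, by simp [hk0, Ssum_zero]⟩
          · exact absurd hgl (frt_interior ha k hk0 (by omega))
        · have hgl : (concatPaths t)[k - (a.length - 1)]? = some u := by
            rw [List.getElem?_append_right (by simp [List.length_dropLast]; omega)] at hget
            simpa [List.length_dropLast] using hget
          have hk' : (k - (a.length - 1)) + 1 < (concatPaths t).length := by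
            rw [List.length_append, List.length_dropLast] at hk
            omega
          obtain ⟨j, hj, hsum⟩ := ih ht (k - (a.length - 1)) hk' hgl
          exact ⟨j + 1, by simpa using hj, by rw [Ssum_succ]; omega⟩

lemma Ssum_le_sum (ls : List (List V)) (k : ℕ) :
    Ssum ls k ≤ (ls.map fun l => l.length - 1).sum := by
  unfold Ssum
  conv_rhs => rw [← List.take_append_drop k ls]
  rw [List.map_append, List.sum_append]
  exact Nat.le_add_right _ _

lemma Ssum_succ_get (ls : List (List V)) (k : ℕ) (hk : k < ls.length) :
    Ssum ls (k + 1) = Ssum ls k + ((ls.get ⟨k, hk⟩).length - 1) := by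
  unfold Ssum
  rw [List.take_succ, List.map_append, List.sum_append]
  congr 1
  have h2 : ls[k]? = some (ls.get ⟨k, hk⟩) := by
    rw [List.getElem?_eq_getElem hk]
    rfl
  rw [h2]
  simp

lemma iSet_lt {ls : List (List V)} {n : ℕ} (hn : n ∈ iSet M ls) :
    n < (ls.map fun l => l.length - 1).sum := by
  obtain ⟨k, hk, hlong, rfl⟩ := hn
  have h1 := Ssum_succ_get ls k hk
  have h2 := Ssum_le_sum ls (k + 1)
  omega

lemma length_le_sum {m : ℕ} : ∀ (L : List ℕ), (∀ x ∈ L, m ≤ x) → L.length * m ≤ L.sum := by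
  intro L
  induction L with
  | nil => simp
  | cons x xs ih =>
      intro h
      have h1 := h x (by simp)
      have h2 := ih (fun y hy => h y (by simp [hy]))
      simp only [List.length_cons, List.sum_cons]
      nlinarith

lemma sum_filter_le (q : List V → Prop) [DecidablePred q] (f : List V → ℕ) :
    ∀ (ls : List (List V)),
    ((ls.filter fun l => q l).map f).sum ≤ (ls.map f).sum := by
  intro ls
  induction ls with
  | nil => simp
  | cons a t ih =>
      by_cases hq : q a
      · rw [filter_cons_pos hq]
        simp only [List.map_cons, List.sum_cons]
        omega
      · rw [filter_cons_neg hq]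
        simp only [List.map_cons, List.sum_cons]
        omega

lemma length_filter_add (q : List V → Prop) [DecidablePred q] :
    ∀ (ls : List (List V)),
    (ls.filter fun l => q l).length + (ls.filter fun l => ¬ q l).length = ls.length := by
  intro ls
  induction ls with
  | nil => simp
  | cons a t ih =>
      by_cases hq : q a
      · rw [filter_cons_pos hq, filter_cons_neg (q := fun l => ¬ q l) (not_not_intro hq)]
        simp only [List.length_cons]
        omega
      · rw [filter_cons_neg hq, filter_cons_pos (q := fun l => ¬ q l) hq]
        simp only [List.length_cons]
        omega


lemma sum_eq {ls : List (List V)} {p : ℕ} (h : ∀ l ∈ ls, FRet G u l)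
    (hlen : (concatPaths ls).length = p + 1) (hp : 0 < p) :
    ls ≠ [] ∧ (ls.map fun l => l.length - 1).sum = p := by
  have hne : ls ≠ [] := by
    intro he
    rw [he] at hlen
    simp [cp_nil] at hlen
  have := cp_len h hne
  exact ⟨hne, by omega⟩

lemma visits_card {ls : List (List V)} {p : ℕ} (h : ∀ l ∈ ls, FRet G u l)
    {l : List V} (hl : l = concatPaths ls) (hlen : l.length = p + 1) :
    Nat.card {k : Fin p // l[(k : ℕ)]? = some u} ≤ ls.length := by
  have key : ∀ k : {k : Fin p // l[(k : ℕ)]? = some u},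
      ∃ j, j < ls.length ∧ (k.1 : ℕ) = Ssum ls j := by
    rintro ⟨k, hk⟩
    apply visits_mem ls h k
    · rw [← hl, hlen]
      have := k.2
      omega
    · rw [← hl]
      exact hk
  choose f hf1 hf2 using key
  have hinj : Function.Injective (fun k => (⟨f k, hf1 k⟩ : Fin ls.length)) := by
    intro k₁ k₂ he
    simp only [Fin.mk.injEq] at he
    apply Subtype.ext
    apply Fin.ext
    rw [hf2 k₁, hf2 k₂, he]
  calc Nat.card {k : Fin p // l[(k : ℕ)]? = some u} ≤ Nat.card (Fin ls.length) :=
        Nat.card_le_card_of_injective _ hinj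
    _ = ls.length := by simp

end JumpsAux

open JumpsAux in
/-- Injectivity of the encoding `γ ↦ (γ⁻, γ⁺, i(γ))` of a closed path at `u` by the
concatenation `γ⁻` of its first returns of length `≤ M`, the concatenation `γ⁺` of its
first returns of length `> M`, and the set `i(γ)` of starting times of the long first
returns; moreover there are at most `p/M` long first returns, and the length of `γ⁻` is at
least `r(γ) − #i(γ)` where `r(γ)` is the number of visits of `γ` to `u`. -/
theorem jumps_stmt10 {V : Type*} [Countable V] (G : V → V → Prop) (u : V) (p M : ℕ)
    (hM : 1 ≤ M) (hp : 0 < p) :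
    ∃ Φ : {l : List V // IsClosedPathList G u p l} → List V × List V × Set ℕ,
      Function.Injective Φ ∧
      ∀ (γ : {l : List V // IsClosedPathList G u p l}) (ls : List (List V)),
        (∀ l ∈ ls, ∃ q : ℕ, 0 < q ∧ IsFirstReturn G u q l) → γ.val = concatPaths ls →
        Φ γ = (concatPaths (ls.filter fun l => l.length ≤ M + 1),
               concatPaths (ls.filter fun l => ¬ l.length ≤ M + 1),
               {n : ℕ | ∃ (k : ℕ) (h : k < ls.length), M + 1 < (ls.get ⟨k, h⟩).length ∧
                 n = ((ls.take k).map fun l => l.length - 1).sum}) ∧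
        ((ls.filter fun l => ¬ l.length ≤ M + 1).length : ℝ) ≤ (p : ℝ) / M ∧
        (Nat.card {k : Fin p // γ.val[(k : ℕ)]? = some u} : ℤ) -
            ((ls.filter fun l => ¬ l.length ≤ M + 1).length : ℤ) ≤
          Int.ofNat (((ls.filter fun l => l.length ≤ M + 1).map fun l => l.length - 1).sum) := by
  classical
  refine ⟨fun γ =>
    if h : ∃ ls : List (List V), (∀ l ∈ ls, FRet G u l) ∧ γ.val = concatPaths ls
    then (concatPaths (h.choose.filter fun l => l.length ≤ M + 1),
          concatPaths (h.choose.filter fun l => ¬ l.length ≤ M + 1),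
          iSet M h.choose)
    else (γ.val, [], {p}), ?_, ?_⟩
  · -- injectivity
    intro γ₁ γ₂ hΦ
    by_cases h₁ : ∃ ls : List (List V), (∀ l ∈ ls, FRet G u l) ∧ γ₁.val = concatPaths ls <;>
      by_cases h₂ : ∃ ls : List (List V), (∀ l ∈ ls, FRet G u l) ∧ γ₂.val = concatPaths ls
    · simp only [dif_pos h₁, dif_pos h₂] at hΦ
      simp only [Prod.mk.injEq] at hΦ
      have he := encInj h₁.choose h₂.choose h₁.choose_spec.1 h₂.choose_spec.1
        hΦ.1 hΦ.2.1 hΦ.2.2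
      apply Subtype.ext
      rw [h₁.choose_spec.2, h₂.choose_spec.2, he]
    · exfalso
      simp only [dif_pos h₁, dif_neg h₂] at hΦ
      simp only [Prod.mk.injEq] at hΦ
      have hps : p ∈ iSet M h₁.choose := by rw [hΦ.2.2]; rfl
      have hlt := iSet_lt hps
      obtain ⟨-, hsum⟩ := sum_eq h₁.choose_spec.1
        (by rw [← h₁.choose_spec.2]; exact γ₁.prop.1) hp
      omega
    · exfalso
      simp only [dif_neg h₁, dif_pos h₂] at hΦ
      simp only [Prod.mk.injEq] at hΦ
      have hps : p ∈ iSet M h₂.choose := by rw [← hΦ.2.2]; rfl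
      have hlt := iSet_lt hps
      obtain ⟨-, hsum⟩ := sum_eq h₂.choose_spec.1
        (by rw [← h₂.choose_spec.2]; exact γ₂.prop.1) hp
      omega
    · simp only [dif_neg h₁, dif_neg h₂] at hΦ
      simp only [Prod.mk.injEq] at hΦ
      exact Subtype.ext hΦ.1
  · -- forced value and inequalities
    intro γ ls hls hcp
    have h : ∃ ls' : List (List V), (∀ l ∈ ls', FRet G u l) ∧ γ.val = concatPaths ls' :=
      ⟨ls, hls, hcp⟩
    have he : h.choose = ls :=
      decUniq h.choose_spec.1 hls (h.choose_spec.2.symm.trans hcp)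
    obtain ⟨hne, hsum⟩ := sum_eq hls (by rw [← hcp]; exact γ.prop.1) hp
    refine ⟨?_, ?_, ?_⟩
    · show dite _ _ _ = _
      rw [dif_pos h, he]
      rfl
    · -- number of long first returns
      have hterm : ∀ x ∈ (ls.filter fun l => ¬ l.length ≤ M + 1).map
          (fun l => l.length - 1), M ≤ x := by
        rintro x hx
        rw [List.mem_map] at hx
        obtain ⟨l, hl, rfl⟩ := hx
        have h2 : ¬ l.length ≤ M + 1 := by simpa using List.of_mem_filter hl
        omega
      have h1 := length_le_sum _ hterm
      have h2 := sum_filter_le (fun l => ¬ l.length ≤ M + 1) (fun l => l.length - 1) ls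
      rw [List.length_map] at h1
      rw [le_div_iff₀ (by exact_mod_cast Nat.lt_of_lt_of_le Nat.zero_lt_one hM)]
      exact_mod_cast le_trans (le_trans h1 h2) (le_of_eq hsum)
    · -- visits bound
      have hr := visits_card hls hcp γ.prop.1
      have hfl := length_filter_add (fun l => l.length ≤ M + 1) ls
      have hterm : ∀ x ∈ (ls.filter fun l => l.length ≤ M + 1).map
          (fun l => l.length - 1), 1 ≤ x := by
        rintro x hx
        rw [List.mem_map] at hx
        obtain ⟨l, hl, rfl⟩ := hx
        have := frt_len (hls l (List.mem_of_mem_filter hl))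
        omega
      have h1 := length_le_sum _ hterm
      rw [List.length_map, Nat.mul_one] at h1
      simp only [Int.ofNat_eq_coe]
      omega
end

section
/- Let (f_n) be a sequence of C^1 maps of [0,1] converging in the C^1 topology to f, and for each n let P_n be a natural partition of f_n. Then for every positive integer m, sup_n #P_n(m) < ∞, where P_n(m) is the set of elements of P_n on which |f_n'| attains the value 1/m. -/
open Filter Topology

/-- `P` is a natural partition of the `C^1` interval map `f` : a countable collection of
pairwise disjoint critical monotone branches (open intervals of `[0,1]` with endpoints in
`{f' = 0} ∪ {0,1}` on which `f` is monotone) whose union covers `{f' ≠ 0}`. -/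
structure IsNaturalPartition (f : ℝ → ℝ) (P : Set (Set ℝ)) : Prop where
  countable : P.Countable
  branch : ∀ I ∈ P, ∃ a b : ℝ, a < b ∧ I = Set.Ioo a b ∧ Set.Ioo a b ⊆ Set.Icc 0 1 ∧
    (deriv f a = 0 ∨ a = 0 ∨ a = 1) ∧ (deriv f b = 0 ∨ b = 0 ∨ b = 1) ∧
    (MonotoneOn f (Set.Ioo a b) ∨ AntitoneOn f (Set.Ioo a b))
  disjoint : P.PairwiseDisjoint id
  covers : {x ∈ Set.Ioo (0 : ℝ) 1 | deriv f x ≠ 0} ⊆ ⋃₀ P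

/-- `P(m)` : the set of elements of the natural partition `P` on which `|f'|` attains `1/m`. -/
def partAttains (f : ℝ → ℝ) (P : Set (Set ℝ)) (m : ℕ) : Set (Set ℝ) :=
  {I ∈ P | ∃ x ∈ I, 1 / (m : ℝ) ≤ |deriv f x|}

lemma countQ {δ : ℝ} (hδ : 0 < δ) (Q : Set (Set ℝ)) (hd : Q.PairwiseDisjoint id)
    (hb : ∀ I ∈ Q, ∃ a b : ℝ, 0 ≤ a ∧ a ≤ 1 ∧ δ ≤ b - a ∧ I = Set.Ioo a b) :
    Q.Finite ∧ Nat.card Q ≤ ⌊(1 + δ)/δ⌋₊ + 1 := by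
  set k : Set ℝ → ℕ := fun I => ⌊(sInf I + δ/2)/δ⌋₊ with hk
  have hinf : ∀ I ∈ Q, ∃ a b : ℝ, 0 ≤ a ∧ a ≤ 1 ∧ δ ≤ b - a ∧ I = Set.Ioo a b ∧ sInf I = a := by
    intro I hI
    obtain ⟨a, b, h0, h1, hab, hIab⟩ := hb I hI
    exact ⟨a, b, h0, h1, hab, hIab, by rw [hIab, csInf_Ioo (by linarith)]⟩
  have key : ∀ I ∈ Q, ∀ J ∈ Q, I ≠ J → δ ≤ |sInf I - sInf J| := by
    intro I hI J hJ hne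
    obtain ⟨a, b, ha0, ha1, hab, hIab, hIinf⟩ := hinf I hI
    obtain ⟨c, d, hc0, hc1, hcd, hJcd, hJinf⟩ := hinf J hJ
    have hdis : Disjoint I J := hd hI hJ hne
    have hcases : b ≤ c ∨ d ≤ a := by
      by_contra h
      push_neg at h
      obtain ⟨hcb, had⟩ := h
      have ht : (max a c + min b d)/2 ∈ I ∩ J := by
        have h1 : max a c < min b d := by
          rcases max_cases a c with ⟨he, _⟩ | ⟨he, _⟩ <;> rcases min_cases b d with ⟨hf, _⟩ | ⟨hf, _⟩ <;>
            rw [he, hf] <;> linarith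
        constructor
        · rw [hIab]
          constructor
          · have := le_max_left a c; linarith
          · have := min_le_left b d; linarith
        · rw [hJcd]
          constructor
          · have := le_max_right a c; linarith
          · have := min_le_right b d; linarith
      exact (Set.disjoint_left.mp hdis ht.1) ht.2
    rw [hIinf, hJinf]
    rcases hcases with h | h
    · rw [abs_sub_comm, abs_of_nonneg (by linarith)]; linarith
    · rw [abs_of_nonneg (by linarith)]; linarith
  have hinj : Set.InjOn k Q := by
    intro I hI J hJ hkeq
    by_contra hne
    have hsep := key I hI J hJ hne
    obtain ⟨a, b, ha0, ha1, hab, hIab, hIinf⟩ := hinf I hI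
    obtain ⟨c, d, hc0, hc1, hcd, hJcd, hJinf⟩ := hinf J hJ
    have hu0 : (0:ℝ) ≤ (sInf I + δ/2)/δ := by
      rw [hIinf]; positivity
    have hv0 : (0:ℝ) ≤ (sInf J + δ/2)/δ := by
      rw [hJinf]; positivity
    have h1 := Nat.floor_le hu0
    have h2 := Nat.lt_floor_add_one ((sInf I + δ/2)/δ)
    have h3 := Nat.floor_le hv0
    have h4 := Nat.lt_floor_add_one ((sInf J + δ/2)/δ)
    simp only [hk] at hkeq
    rw [hkeq] at h1 h2
    have hlt : |(sInf I + δ/2)/δ - (sInf J + δ/2)/δ| < 1 := by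
      rw [abs_lt]; constructor <;> [linarith; linarith]
    have : |(sInf I + δ/2)/δ - (sInf J + δ/2)/δ| = |sInf I - sInf J| / δ := by
      rw [div_sub_div_same, abs_div, abs_of_pos hδ]
      ring_nf
    rw [this] at hlt
    have : |sInf I - sInf J| < δ := by
      rw [div_lt_one hδ] at hlt; exact hlt
    linarith
  have himg : k '' Q ⊆ Set.Iic (⌊(1 + δ)/δ⌋₊) := by
    rintro _ ⟨I, hI, rfl⟩
    obtain ⟨a, b, ha0, ha1, hab, hIab, hIinf⟩ := hinf I hI
    simp only [hk, Set.mem_Iic]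
    apply Nat.floor_mono
    rw [hIinf]
    gcongr
    linarith
  have hfin : Q.Finite := Set.Finite.of_finite_image ((Set.finite_Iic _).subset himg) hinj
  refine ⟨hfin, ?_⟩
  rw [Nat.card_coe_set_eq, ← Set.ncard_image_of_injOn hinj]
  calc (k '' Q).ncard ≤ (Set.Iic (⌊(1 + δ)/δ⌋₊)).ncard :=
        Set.ncard_le_ncard himg (Set.finite_Iic _)
    _ = ⌊(1 + δ)/δ⌋₊ + 1 := by
        rw [← Finset.coe_Iic, Set.ncard_coe_finset, Nat.card_Iic]

lemma branch_len (g : ℝ → ℝ) (P : Set (Set ℝ)) (m : ℕ) (hP : IsNaturalPartition g P)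
    {δ : ℝ} (hδ1 : δ ≤ 1)
    (hsep : ∀ x ∈ Set.Icc (0:ℝ) 1, ∀ y ∈ Set.Icc (0:ℝ) 1,
      1/(m:ℝ) ≤ |deriv g x| → deriv g y = 0 → δ ≤ |x - y|) :
    ∀ I ∈ partAttains g P m, ∃ a b : ℝ, 0 ≤ a ∧ a ≤ 1 ∧ δ ≤ b - a ∧ I = Set.Ioo a b := by
  rintro I ⟨hIP, x, hxI, hx⟩
  obtain ⟨a, b, hab, hIab, hsub, hA, hB, -⟩ := hP.branch I hIP
  have ha0 : 0 ≤ a := by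
    by_contra h
    push_neg at h
    have hm : a < min b 0 := lt_min hab h
    have ht : (a + min b 0)/2 ∈ Set.Ioo a b := by
      constructor
      · linarith
      · have := min_le_left b 0; linarith
    have := (hsub ht).1
    have := min_le_right b 0
    linarith
  have hb1 : b ≤ 1 := by
    by_contra h
    push_neg at h
    have hm : max a 1 < b := max_lt hab h
    have ht : (max a 1 + b)/2 ∈ Set.Ioo a b := by
      constructor
      · have := le_max_left a 1; linarith
      · linarith
    have := (hsub ht).2
    have := le_max_right a 1
    linarith
  have ha1 : a ≤ 1 := le_of_lt (lt_of_lt_of_le hab hb1)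
  have hamem : a ∈ Set.Icc (0:ℝ) 1 := ⟨ha0, ha1⟩
  have hbmem : b ∈ Set.Icc (0:ℝ) 1 := ⟨by linarith, hb1⟩
  rw [hIab] at hxI
  have hxmem : x ∈ Set.Icc (0:ℝ) 1 := hsub hxI
  refine ⟨a, b, ha0, ha1, ?_, hIab⟩
  rcases hA with hA | hA | hA
  · have := hsep x hxmem a hamem hx hA
    rw [abs_of_pos (by linarith [hxI.1])] at this
    linarith [hxI.2]
  · rcases hB with hB | hB | hB
    · have := hsep x hxmem b hbmem hx hB
      rw [abs_of_neg (by linarith [hxI.2])] at this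
      linarith [hxI.1]
    · exfalso; rw [hA, hB] at hab; exact lt_irrefl 0 hab
    · rw [hA, hB]; linarith
  · exfalso; linarith

lemma sep_single (g : ℝ → ℝ) (hg : Continuous (deriv g)) (m : ℕ) (hm : 0 < m) :
    ∃ δ : ℝ, 0 < δ ∧ δ ≤ 1 ∧ ∀ x ∈ Set.Icc (0:ℝ) 1, ∀ y ∈ Set.Icc (0:ℝ) 1,
      1/(m:ℝ) ≤ |deriv g x| → deriv g y = 0 → δ ≤ |x - y| := by
  have hm' : (0:ℝ) < 1/(m:ℝ) := by positivity
  have uc := (isCompact_Icc (a := (0:ℝ)) (b := 1)).uniformContinuousOn_of_continuous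
    hg.continuousOn
  obtain ⟨δ0, hδ0, h⟩ := Metric.uniformContinuousOn_iff.mp uc (1/(m:ℝ)) hm'
  refine ⟨min δ0 1, lt_min hδ0 one_pos, min_le_right _ _, ?_⟩
  intro x hx y hy hgx hgy
  by_contra hc
  push_neg at hc
  have hd : dist x y < δ0 := by
    rw [Real.dist_eq]
    exact lt_of_lt_of_le hc (min_le_left _ _)
  have := h x hx y hy hd
  rw [Real.dist_eq, hgy, sub_zero] at this
  linarith

lemma sep_uniform (f : ℝ → ℝ) (fn : ℕ → ℝ → ℝ) (hf : ContDiff ℝ 1 f)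
    (hC1 : TendstoUniformlyOn (fun n => deriv (fn n)) (deriv f) atTop (Set.Icc 0 1))
    (m : ℕ) (hm : 0 < m) :
    ∃ δ : ℝ, 0 < δ ∧ δ ≤ 1 ∧ ∃ N : ℕ, ∀ n ≥ N, ∀ x ∈ Set.Icc (0:ℝ) 1, ∀ y ∈ Set.Icc (0:ℝ) 1,
      1/(m:ℝ) ≤ |deriv (fn n) x| → deriv (fn n) y = 0 → δ ≤ |x - y| := by
  have hm' : (0:ℝ) < 1/(4*(m:ℝ)) := by positivity
  have uc := (isCompact_Icc (a := (0:ℝ)) (b := 1)).uniformContinuousOn_of_continuous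
    (hf.continuous_deriv le_rfl).continuousOn
  obtain ⟨δ0, hδ0, h⟩ := Metric.uniformContinuousOn_iff.mp uc (1/(4*(m:ℝ))) hm'
  obtain ⟨N, hN⟩ := Filter.eventually_atTop.mp
    (Metric.tendstoUniformlyOn_iff.mp hC1 (1/(4*(m:ℝ))) hm')
  refine ⟨min δ0 1, lt_min hδ0 one_pos, min_le_right _ _, N, ?_⟩
  intro n hn x hx y hy hgx hgy
  by_contra hc
  push_neg at hc
  have hd : dist x y < δ0 := by
    rw [Real.dist_eq]
    exact lt_of_lt_of_le hc (min_le_left _ _)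
  have h1 := h x hx y hy hd
  have h2 := hN n hn x hx
  have h3 := hN n hn y hy
  rw [hgy, Real.dist_eq, sub_zero] at h3
  rw [Real.dist_eq] at h1 h2
  have hmm : (0:ℝ) < 1/(m:ℝ) := by positivity
  have t1 : |deriv (fn n) x| ≤ |deriv (fn n) x - deriv f x| + |deriv f x - deriv f y|
      + |deriv f y| := by
    calc |deriv (fn n) x| = |(deriv (fn n) x - deriv f x) + (deriv f x - deriv f y)
        + deriv f y| := by ring_nf
      _ ≤ _ := by
        apply (abs_add_le _ _).trans
        gcongr
        exact abs_add_le _ _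
  rw [abs_sub_comm (deriv (fn n) x)] at t1
  have : 1/(4*(m:ℝ)) + 1/(4*(m:ℝ)) + 1/(4*(m:ℝ)) < 1/(m:ℝ) := by
    have h1m : (1:ℝ) ≤ (m:ℝ) := Nat.one_le_cast.mpr hm
    rw [← add_div, ← add_div, div_lt_div_iff₀ (by positivity) (by positivity)]
    nlinarith
  linarith

/-- Let `(fₙ)` be `C^1` interval maps converging in the `C^1` topology to `f`, and `Pₙ` a
natural partition of `fₙ` for each `n`.  Then for every `m ≥ 1`, `sup_n #Pₙ(m) < ∞`. -/
theorem jumps_stmt13 (f : ℝ → ℝ) (fn : ℕ → ℝ → ℝ)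
    (hf : ContDiff ℝ 1 f) (hmaps : Set.MapsTo f (Set.Icc 0 1) (Set.Icc 0 1))
    (hfn : ∀ n, ContDiff ℝ 1 (fn n))
    (hmapsn : ∀ n, Set.MapsTo (fn n) (Set.Icc 0 1) (Set.Icc 0 1))
    (hC0 : TendstoUniformlyOn fn f atTop (Set.Icc 0 1))
    (hC1 : TendstoUniformlyOn (fun n => deriv (fn n)) (deriv f) atTop (Set.Icc 0 1))
    (Pn : ℕ → Set (Set ℝ)) (hPn : ∀ n, IsNaturalPartition (fn n) (Pn n)) :
    ∀ m : ℕ, 0 < m → ∃ C : ℕ, ∀ n,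
      (partAttains (fn n) (Pn n) m).Finite ∧
      Nat.card (partAttains (fn n) (Pn n) m) ≤ C := by
  intro m hm
  obtain ⟨δu, hδu, hδu1, N, hsepu⟩ := sep_uniform f fn hf hC1 m hm
  have hper : ∀ n, ∃ C : ℕ, (partAttains (fn n) (Pn n) m).Finite ∧
      Nat.card (partAttains (fn n) (Pn n) m) ≤ C := by
    intro n
    obtain ⟨δ, hδ, hδ1, hsep⟩ := sep_single (fn n) ((hfn n).continuous_deriv le_rfl) m hm
    have hsub : partAttains (fn n) (Pn n) m ⊆ Pn n := fun I hI => hI.1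
    have h := countQ hδ _ ((hPn n).disjoint.subset hsub)
      (branch_len (fn n) (Pn n) m (hPn n) hδ1 hsep)
    exact ⟨_, h.1, h.2⟩
  choose Cf hCf using hper
  refine ⟨max (⌊(1+δu)/δu⌋₊ + 1) ((Finset.range N).sup Cf), ?_⟩
  intro n
  by_cases hn : n < N
  · exact ⟨(hCf n).1, le_trans (hCf n).2
      (le_trans (Finset.le_sup (Finset.mem_range.mpr hn)) (le_max_right _ _))⟩
  · push_neg at hn
    have hsub : partAttains (fn n) (Pn n) m ⊆ Pn n := fun I hI => hI.1
    have h := countQ hδu _ ((hPn n).disjoint.subset hsub)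
      (branch_len (fn n) (Pn n) m (hPn n) hδu1 (hsepu n hn))
    exact ⟨h.1, le_trans h.2 (le_max_left _ _)⟩
end
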